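/- (Theorem 1, statement 4, degree additivity.) If U = G_{z₁}(φ₁,g₁) · … · G_{z_η}(φ_η,g_η), where η ≥ 1, z_ι ∈ Ξ, φ_ι ∈ Φ, g_ι ∈ Δ_{z_ι}, each (φ_ι,g_ι) ≠ (0,0), and z_ι ≠ z_{ι+1} for ι = 1,…,η−1, then deg U = Σ_{ι=1}^{η} deg G_{z_ι}(φ_ι,g_ι) = Σ_{ι=1}^{η} deg(φ_ι − g_ι*g_ι), where deg denotes the degree of a polynomial matrix (the largest ι with nonzero coefficient of ω^ι). -/

import Mathlib

open Polynomial Matrix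

noncomputable section

/-- The matrix `D = diag(-1,1,...,1)` of size `ν × ν` with `ν = n + 2`. -/
def Dm (n : ℕ) : Matrix (Fin (n + 2)) (Fin (n + 2)) ℂ :=
  Matrix.diagonal fun i => if i = 0 then -1 else 1

/-- Coefficientwise complex conjugation of a scalar polynomial (`ω` treated as real). -/
def cstar (p : ℂ[X]) : ℂ[X] := p.map (starRingEnd ℂ)

/-- Polynomial matrices of size `(n+2) × (n+2)`. -/
abbrev PM (n : ℕ) := Matrix (Fin (n + 2)) (Fin (n + 2)) ℂ[X]

/-- `U(ω)* = Σ Uι* ωⁱ` : coefficientwise conjugate transpose of a polynomial matrix. -/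
def Mstar (n : ℕ) (U : PM n) : PM n := Matrix.of fun i j => cstar (U j i)

/-- The scalar polynomial `g(ω)* h(ω)` for vector polynomials `g, h`. -/
def pdot (n : ℕ) (g h : Fin (n + 2) → ℂ[X]) : ℂ[X] := ∑ i, cstar (g i) * h i

/-- `Ξ = {z : z₁ = 1, z* D z = 0}`. -/
def Xi (n : ℕ) : Set (Fin (n + 2) → ℂ) :=
  {z | z 0 = 1 ∧ star z ⬝ᵥ (Dm n).mulVec z = 0}

/-- `Δ_z⁰ = {d : d* z = d* D z = 0}`. -/
def Delta0 (n : ℕ) (z : Fin (n + 2) → ℂ) : Set (Fin (n + 2) → ℂ) :=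
  {d | star d ⬝ᵥ z = 0 ∧ star d ⬝ᵥ (Dm n).mulVec z = 0}

/-- `Φ = {φ : φ(0) = 0, φ* = -φ}`. -/
def Phi : Set ℂ[X] := {φ | φ.eval 0 = 0 ∧ cstar φ = -φ}

/-- `Δ_z` : vector polynomials vanishing at 0 with all coefficient vectors in `Δ_z⁰`. -/
def DeltaZ (n : ℕ) (z : Fin (n + 2) → ℂ) : Set (Fin (n + 2) → ℂ[X]) :=
  {g | (∀ i, (g i).eval 0 = 0) ∧ ∀ k : ℕ, (fun i => (g i).coeff k) ∈ Delta0 n z}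

/-- `G_z(φ,g) = D·[z(φ - (1/2)g*g)z* + (zg* - gz*)] + I`. -/
def Gmat (n : ℕ) (z : Fin (n + 2) → ℂ) (φ : ℂ[X]) (g : Fin (n + 2) → ℂ[X]) : PM n :=
  (Dm n).map Polynomial.C *
      Matrix.of (fun i j =>
        Polynomial.C (z i) * (φ - Polynomial.C (1 / 2 : ℂ) * pdot n g g) *
            Polynomial.C (star (z j)) +
          (Polynomial.C (z i) * cstar (g j) - g i * Polynomial.C (star (z j)))) +
    1

/-- `M` : the group of polynomial matrices with `U(ω) D U(ω)* = D`. -/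
def MM (n : ℕ) : Set (PM n) :=
  {U | U * (Dm n).map Polynomial.C * Mstar n U = (Dm n).map Polynomial.C}

/-- `M₀ = {U ∈ M : U(0) = I}`. -/
def M0 (n : ℕ) : Set (PM n) :=
  {U | U ∈ MM n ∧ U.map (fun p => p.eval 0) = 1}

/-- `M_z = {G_z(φ,g) : φ ∈ Φ, g ∈ Δ_z}`. -/
def Mz (n : ℕ) (z : Fin (n + 2) → ℂ) : Set (PM n) :=
  {U | ∃ φ ∈ Phi, ∃ g ∈ DeltaZ n z, U = Gmat n z φ g}

/-- `Ψ_z = {G_z(φ,0) : φ ∈ Φ}`. -/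
def Psi (n : ℕ) (z : Fin (n + 2) → ℂ) : Set (PM n) :=
  {U | ∃ φ ∈ Phi, U = Gmat n z φ 0}

/-- Degree of a polynomial matrix: the largest `ι` with a nonzero coefficient `ω^ι`. -/
def degPM (n : ℕ) (U : PM n) : ℕ :=
  Finset.univ.sup fun p : Fin (n + 2) × Fin (n + 2) => (U p.1 p.2).natDegree

/-- The diagonal entries of `D`. -/
def dd {n : ℕ} (i : Fin (n + 2)) : ℂ := if i = 0 then -1 else 1
lemma cstar_coeff (p : ℂ[X]) (k : ℕ) : (cstar p).coeff k = (starRingEnd ℂ) (p.coeff k) :=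
  coeff_map _ _
lemma cstar_natDegree (p : ℂ[X]) : (cstar p).natDegree = p.natDegree :=
  natDegree_map_eq_of_injective (starRingEnd ℂ).injective p
lemma cstar_mul (p q : ℂ[X]) : cstar (p * q) = cstar p * cstar q := Polynomial.map_mul _
lemma cstar_cstar (p : ℂ[X]) : cstar (cstar p) = p := by
  simp only [cstar, Polynomial.map_map]
  have : (starRingEnd ℂ).comp (starRingEnd ℂ) = RingHom.id ℂ := by
    ext x; simp
  rw [this, Polynomial.map_id]
lemma natDegree_pos_of_eval_zero (p : ℂ[X]) (h0 : p.coeff 0 = 0) (hp : p ≠ 0) :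
    1 ≤ p.natDegree := by
  by_contra h
  push_neg at h
  interval_cases hpd : p.natDegree
  · exact hp (by rw [Polynomial.eq_C_of_natDegree_eq_zero hpd, h0, map_zero])
lemma coeff_natDegree_ne (p : ℂ[X]) (M : ℕ) (hp : p ≠ 0) (h : p.natDegree = M) :
    p.coeff M ≠ 0 := by
  rw [← h]; exact fun hc => hp (Polynomial.leadingCoeff_eq_zero.mp hc)

/-- key scalar degree lemma -/
lemma key_deg (φ P : ℂ[X]) (hφ : cstar φ = -φ) (hP : cstar P = P)
    (t : ℂ) (ht : t ≠ 0) (htr : (starRingEnd ℂ) t = t) (hne : ¬(φ = 0 ∧ P = 0)) :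
    (φ - Polynomial.C t * P).natDegree = max φ.natDegree P.natDegree ∧
    (φ - Polynomial.C t * P).coeff (max φ.natDegree P.natDegree) ≠ 0 := by
  set M := max φ.natDegree P.natDegree with hM
  have hcoeff : (φ - Polynomial.C t * P).coeff M ≠ 0 := by
    intro h0
    have h1 : φ.coeff M - t * P.coeff M = 0 := by
      simpa [coeff_sub, coeff_C_mul] using h0
    have hφc : (starRingEnd ℂ) (φ.coeff M) = -φ.coeff M := by
      have := congrArg (fun q => q.coeff M) hφ
      simpa [cstar_coeff] using this
    have hPc : (starRingEnd ℂ) (P.coeff M) = P.coeff M := by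
      have := congrArg (fun q => q.coeff M) hP
      simpa [cstar_coeff] using this
    have h2 : -φ.coeff M - t * P.coeff M = 0 := by
      have := congrArg (starRingEnd ℂ) h1
      simpa [map_sub, _root_.map_mul, hφc, hPc, htr] using this
    have hb : P.coeff M = 0 := by
      have h3 : t * P.coeff M = 0 := by linear_combination (-(1:ℂ)/2) * h1 - (1/2 : ℂ) * h2
      exact (mul_eq_zero.mp h3).resolve_left ht
    have ha : φ.coeff M = 0 := by linear_combination h1 + t * hb
    rcases le_total φ.natDegree P.natDegree with h | h
    · have hMP : M = P.natDegree := max_eq_right h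
      by_cases hP0 : P = 0
      · have hφ0 : φ ≠ 0 := fun hh => hne ⟨hh, hP0⟩
        have : P.natDegree = 0 := by rw [hP0]; simp
        have hM0 : M = 0 := by omega
        have : φ.natDegree = 0 := by omega
        exact coeff_natDegree_ne φ M hφ0 (by omega) ha
      · exact coeff_natDegree_ne P M hP0 hMP.symm hb
    · have hMφ : M = φ.natDegree := max_eq_left h
      by_cases hφ0 : φ = 0
      · have hP0 : P ≠ 0 := fun hh => hne ⟨hφ0, hh⟩
        have : φ.natDegree = 0 := by rw [hφ0]; simp
        exact coeff_natDegree_ne P M hP0 (by omega) hb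
      · exact coeff_natDegree_ne φ M hφ0 hMφ.symm ha
  refine ⟨?_, hcoeff⟩
  apply Polynomial.natDegree_eq_of_le_of_coeff_ne_zero _ hcoeff
  refine le_trans (Polynomial.natDegree_sub_le _ _) ?_
  exact max_le_max le_rfl (Polynomial.natDegree_C_mul_le _ _)
lemma dd_zero {n : ℕ} : dd (0 : Fin (n+2)) = -1 := rfl
lemma pdot_cstar (n : ℕ) (g : Fin (n + 2) → ℂ[X]) : cstar (pdot n g g) = pdot n g g := by
  unfold pdot
  have : cstar (∑ i, cstar (g i) * g i) = ∑ i, cstar (cstar (g i) * g i) :=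
    map_sum (Polynomial.mapRingHom (starRingEnd ℂ)) _ _
  rw [this]
  exact Finset.sum_congr rfl fun i _ => by rw [cstar_mul, cstar_cstar, mul_comm]
lemma pdot_natDegree_le (n : ℕ) (g : Fin (n + 2) → ℂ[X]) (m : ℕ)
    (h : ∀ i, (g i).natDegree ≤ m) : (pdot n g g).natDegree ≤ 2 * m := by
  refine Polynomial.natDegree_sum_le_of_forall_le _ _ (fun i _ => ?_)
  refine le_trans (Polynomial.natDegree_mul_le) ?_
  rw [cstar_natDegree]
  have := h i; omega
lemma pdot_coeff_top (n : ℕ) (g : Fin (n + 2) → ℂ[X]) (m : ℕ)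
    (h : ∀ i, (g i).natDegree ≤ m) :
    (pdot n g g).coeff (2 * m) = ∑ i, (starRingEnd ℂ) ((g i).coeff m) * (g i).coeff m := by
  unfold pdot
  rw [Polynomial.finset_sum_coeff]
  refine Finset.sum_congr rfl (fun i _ => ?_)
  have h2 : 2 * m = m + m := by ring
  rw [h2, Polynomial.coeff_mul_add_eq_of_natDegree_le (by rw [cstar_natDegree]; exact h i) (h i),
    cstar_coeff]
lemma dotD (n : ℕ) (z w : Fin (n + 2) → ℂ) :
    star z ⬝ᵥ (Dm n).mulVec w = ∑ i, (starRingEnd ℂ) (z i) * (dd i * w i) := by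
  unfold Dm dotProduct
  refine Finset.sum_congr rfl fun i _ => ?_
  rw [Matrix.mulVec_diagonal]
  rfl
lemma Xi_norm (n : ℕ) (z : Fin (n + 2) → ℂ) (hz : z ∈ Xi n) :
    ∑ i : Fin (n + 1), (starRingEnd ℂ) (z i.succ) * z i.succ = 1 := by
  obtain ⟨hz0, hz1⟩ := hz
  rw [dotD] at hz1
  rw [Fin.sum_univ_succ] at hz1
  have h0 : (starRingEnd ℂ) (z 0) * (dd (0 : Fin (n+2)) * z 0) = -1 := by
    rw [hz0]; simp [dd]
  have hsucc : ∀ i : Fin (n+1), (starRingEnd ℂ) (z i.succ) * (dd i.succ * z i.succ)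
      = (starRingEnd ℂ) (z i.succ) * z i.succ := by
    intro i
    have : dd (i.succ : Fin (n+2)) = 1 := by simp [dd, Fin.succ_ne_zero]
    rw [this, one_mul]
  rw [h0, Finset.sum_congr rfl (fun i _ => hsucc i)] at hz1
  linear_combination hz1
lemma Xi_pair (n : ℕ) (z w : Fin (n + 2) → ℂ) (hz : z ∈ Xi n) (hw : w ∈ Xi n)
    (hne : z ≠ w) : star z ⬝ᵥ (Dm n).mulVec w ≠ 0 := by
  intro h0
  apply hne
  rw [dotD, Fin.sum_univ_succ] at h0
  have hz0 := hz.1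
  have hw0 := hw.1
  have h00 : (starRingEnd ℂ) (z 0) * (dd (0 : Fin (n+2)) * w 0) = -1 := by rw [hz0, hw0]; simp [dd]
  have hsucc : ∀ i : Fin (n+1), (starRingEnd ℂ) (z i.succ) * (dd i.succ * w i.succ)
      = (starRingEnd ℂ) (z i.succ) * w i.succ := by
    intro i
    have : dd (i.succ : Fin (n+2)) = 1 := by simp [dd, Fin.succ_ne_zero]
    rw [this, one_mul]
  rw [h00, Finset.sum_congr rfl (fun i _ => hsucc i)] at h0
  -- now: -1 + ∑ conj (z i.succ) * w i.succ = 0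
  set x : EuclideanSpace ℂ (Fin (n+1)) := WithLp.toLp 2 (fun i : Fin (n+1) => z i.succ) with hx
  set y : EuclideanSpace ℂ (Fin (n+1)) := WithLp.toLp 2 (fun i : Fin (n+1) => w i.succ) with hy
  have hinner : ∀ (a b : EuclideanSpace ℂ (Fin (n+1))),
      (inner ℂ a b : ℂ) = ∑ i, (starRingEnd ℂ) (a i) * b i := by
    intro a b
    rw [PiLp.inner_apply]
    simp only [RCLike.inner_apply']
  have hxy : (inner ℂ x y : ℂ) = 1 := by
    rw [hinner]
    linear_combination h0
  have hnorm : ∀ (a : EuclideanSpace ℂ (Fin (n+1))),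
      (∑ i, (starRingEnd ℂ) (a i) * a i = 1) → ‖a‖ = 1 := by
    intro a ha
    have h1 : (inner ℂ a a : ℂ) = 1 := by rw [hinner]; exact ha
    have h2 := inner_self_eq_norm_sq_to_K (𝕜 := ℂ) a
    rw [h1] at h2
    have h3 : (‖a‖)^2 = 1 := by
      have := congrArg Complex.re h2.symm
      simpa [pow_two] using this
    nlinarith [norm_nonneg a]
  have hxn : ‖x‖ = 1 := hnorm x (Xi_norm n z hz)
  have hyn : ‖y‖ = 1 := hnorm y (Xi_norm n w hw)
  have hxyeq : x = y := (inner_eq_one_iff_of_norm_eq_one hxn hyn).mp hxy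
  funext i
  refine Fin.cases ?_ ?_ i
  · rw [hz0, hw0]
  · intro j
    exact congrArg (fun v : EuclideanSpace ℂ (Fin (n+1)) => v j) hxyeq
lemma Gmat_apply (n : ℕ) (z : Fin (n + 2) → ℂ) (φ : ℂ[X]) (g : Fin (n + 2) → ℂ[X])
    (i j : Fin (n + 2)) :
    Gmat n z φ g i j =
      Polynomial.C (dd i) *
        (Polynomial.C (z i) * (φ - Polynomial.C (1 / 2 : ℂ) * pdot n g g) *
            Polynomial.C (star (z j)) +
          (Polynomial.C (z i) * cstar (g j) - g i * Polynomial.C (star (z j)))) +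
      (if i = j then 1 else 0) := by
  unfold Gmat Dm
  rw [Matrix.add_apply, Matrix.diagonal_map (by simp), Matrix.diagonal_mul, Matrix.one_apply]
  rfl
lemma Gfact (n : ℕ) (z : Fin (n + 2) → ℂ) (φ : ℂ[X]) (g : Fin (n + 2) → ℂ[X])
    (hφ : φ ∈ Phi) (hg : g ∈ DeltaZ n z) (hnt : ¬(φ = 0 ∧ g = 0)) :
    ∃ m : ℕ, ∃ c : ℂ, c ≠ 0 ∧ 1 ≤ m
      ∧ m = (φ - Polynomial.C (1 / 2 : ℂ) * pdot n g g).natDegree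
      ∧ m = (φ - pdot n g g).natDegree
      ∧ (∀ i j, ((Gmat n z φ g) i j).natDegree ≤ m)
      ∧ (∀ i j, ((Gmat n z φ g) i j).coeff m = c * (dd i * (z i * star (z j)))) := by
  set P := pdot n g g with hPdef
  have hPstar : cstar P = P := pdot_cstar n g
  have hφstar : cstar φ = -φ := hφ.2
  have hφ0 : φ.coeff 0 = 0 := by
    rw [Polynomial.coeff_zero_eq_eval_zero]; exact hφ.1
  set M := max φ.natDegree P.natDegree with hMdef
  -- treat the two cases for g
  have hmain : ¬(φ = 0 ∧ P = 0) ∧ 1 ≤ M ∧ (∀ j, (g j).natDegree < M) := by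
    by_cases hg0 : g = 0
    · have hφne : φ ≠ 0 := fun h => hnt ⟨h, hg0⟩
      have hP0 : P = 0 := by
        rw [hPdef, hg0]; unfold pdot cstar; simp
      have hφd : 1 ≤ φ.natDegree := natDegree_pos_of_eval_zero φ hφ0 hφne
      refine ⟨fun h => hφne h.1, le_trans hφd (le_max_left _ _), fun j => ?_⟩
      have hM1' : 1 ≤ M := le_trans hφd (le_max_left _ _)
      rw [hg0]
      simp only [Pi.zero_apply, Polynomial.natDegree_zero]
      omega
    · -- g ≠ 0 : P has degree 2 * mg ≥ 2
      set mg := Finset.univ.sup (fun i => (g i).natDegree) with hmgdef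
      have hmg_le : ∀ i, (g i).natDegree ≤ mg := fun i =>
        Finset.le_sup (f := fun i => (g i).natDegree) (Finset.mem_univ i)
      obtain ⟨i1, hi1⟩ : ∃ i, g i ≠ 0 := by
        by_contra h
        push_neg at h
        exact hg0 (funext h)
      have hi1d : 1 ≤ (g i1).natDegree :=
        natDegree_pos_of_eval_zero _ (by rw [Polynomial.coeff_zero_eq_eval_zero]; exact hg.1 i1) hi1
      have hmg1 : 1 ≤ mg := le_trans hi1d (hmg_le i1)
      obtain ⟨i0, _, hi0⟩ := Finset.exists_mem_eq_sup Finset.univ Finset.univ_nonempty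
        (fun i => (g i).natDegree)
      have hi0d : (g i0).natDegree = mg := hi0.symm
      have hi0ne : g i0 ≠ 0 := by
        intro h
        rw [h] at hi0d
        simp at hi0d
        omega
      have hcoeffP : P.coeff (2 * mg) = ((∑ i, Complex.normSq ((g i).coeff mg) : ℝ) : ℂ) := by
        rw [hPdef, pdot_coeff_top n g mg hmg_le]
        push_cast
        exact Finset.sum_congr rfl fun i _ => by rw [mul_comm, Complex.mul_conj]
      have hpos : (0:ℝ) < ∑ i, Complex.normSq ((g i).coeff mg) := by
        refine Finset.sum_pos' (fun i _ => Complex.normSq_nonneg _) ⟨i0, Finset.mem_univ i0, ?_⟩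
        refine Complex.normSq_pos.mpr ?_
        rw [← hi0d]
        exact fun h => hi0ne (Polynomial.leadingCoeff_eq_zero.mp h)
      have hcoeffne : P.coeff (2 * mg) ≠ 0 := by
        rw [hcoeffP]
        exact_mod_cast ne_of_gt hpos
      have hPd : P.natDegree = 2 * mg :=
        Polynomial.natDegree_eq_of_le_of_coeff_ne_zero (pdot_natDegree_le n g mg hmg_le) hcoeffne
      have hPne : P ≠ 0 := fun h => hcoeffne (by rw [h]; simp)
      have hPM : P.natDegree ≤ M := le_max_right _ _
      refine ⟨fun h => hPne h.2, by omega, fun j => ?_⟩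
      by_cases hj : g j = 0
      · rw [hj]; simp; omega
      · have h1 : 1 ≤ (g j).natDegree :=
          natDegree_pos_of_eval_zero _ (by rw [Polynomial.coeff_zero_eq_eval_zero]; exact hg.1 j) hj
        have h2 := hmg_le j
        omega
  obtain ⟨hne2, hM1, hgj⟩ := hmain
  have hkey := key_deg φ P hφstar hPstar (1/2) (by norm_num) (by norm_num [Complex.ext_iff]) hne2
  have hkey1 := key_deg φ P hφstar hPstar 1 one_ne_zero (by simp) hne2
  have hq : (φ - Polynomial.C (1/2 : ℂ) * P).natDegree = M := hkey.1
  refine ⟨M, (φ - Polynomial.C (1/2 : ℂ) * P).coeff M, hkey.2, hM1, hq.symm, ?_, ?_, ?_⟩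
  · have h5 : φ - P = φ - Polynomial.C 1 * P := by simp
    rw [h5, hkey1.1]
  · intro i j
    rw [Gmat_apply]
    simp only [← hPdef]
    refine le_trans (Polynomial.natDegree_add_le _ _) (max_le ?_ ?_)
    · refine le_trans (Polynomial.natDegree_C_mul_le _ _) ?_
      refine le_trans (Polynomial.natDegree_add_le _ _) (max_le ?_ ?_)
      · refine le_trans (Polynomial.natDegree_mul_le) ?_
        rw [Polynomial.natDegree_C]
        refine le_trans (Nat.add_le_add_right (Polynomial.natDegree_C_mul_le _ _) 0) ?_
        rw [hq]
        omega
      · refine le_trans (Polynomial.natDegree_sub_le _ _) (max_le ?_ ?_)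
        · refine le_trans (Polynomial.natDegree_C_mul_le _ _) ?_
          rw [cstar_natDegree]
          exact le_of_lt (hgj j)
        · refine le_trans (Polynomial.natDegree_mul_le) ?_
          rw [Polynomial.natDegree_C]
          have := hgj i
          omega
    · split_ifs
      · simp
      · simp
  · intro i j
    rw [Gmat_apply]
    simp only [← hPdef]
    have hcg : (cstar (g j)).coeff M = 0 := by
      apply Polynomial.coeff_eq_zero_of_natDegree_lt
      rw [cstar_natDegree]; exact hgj j
    have hgi : (g i).coeff M = 0 := Polynomial.coeff_eq_zero_of_natDegree_lt (hgj i)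
    have hite : ((if i = j then 1 else 0 : ℂ[X])).coeff M = 0 := by
      split_ifs
      · rw [Polynomial.coeff_one]
        simp only [if_neg (by omega : ¬ M = 0)]
      · simp
    rw [Polynomial.coeff_add, hite, add_zero, Polynomial.coeff_C_mul, Polynomial.coeff_add,
      Polynomial.coeff_sub, Polynomial.coeff_mul_C, Polynomial.coeff_C_mul, Polynomial.coeff_C_mul,
      Polynomial.coeff_mul_C, hcg, hgi]
    ring
lemma matmul_deg (n : ℕ) (A B : PM n) (a b : ℕ)
    (hA : ∀ i j, (A i j).natDegree ≤ a) (hB : ∀ i j, (B i j).natDegree ≤ b) :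
    (∀ i j, ((A * B) i j).natDegree ≤ a + b) ∧
    (∀ i j, ((A * B) i j).coeff (a + b) = ∑ t, (A i t).coeff a * (B t j).coeff b) := by
  constructor <;> intro i j
  · rw [Matrix.mul_apply]
    refine Polynomial.natDegree_sum_le_of_forall_le _ _ (fun t _ => ?_)
    exact le_trans Polynomial.natDegree_mul_le (Nat.add_le_add (hA i t) (hB t j))
  · rw [Matrix.mul_apply, Polynomial.finset_sum_coeff]
    exact Finset.sum_congr rfl fun t _ => Polynomial.coeff_mul_add_eq_of_natDegree_le (hA i t) (hB t j)
lemma prod_top (n : ℕ) (k : ℕ) (z : Fin (k + 1) → (Fin (n + 2) → ℂ))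
    (φ : Fin (k + 1) → ℂ[X]) (g : Fin (k + 1) → (Fin (n + 2) → ℂ[X]))
    (hz : ∀ ι, z ι ∈ Xi n) (hφ : ∀ ι, φ ι ∈ Phi) (hg : ∀ ι, g ι ∈ DeltaZ n (z ι))
    (hnt : ∀ ι, ¬(φ ι = 0 ∧ g ι = 0))
    (halt : ∀ (i : ℕ) (h : i + 1 < k + 1), z ⟨i, by omega⟩ ≠ z ⟨i + 1, h⟩) :
    ∃ lam : ℂ, lam ≠ 0 ∧
      (∀ i j, (((List.ofFn fun ι => Gmat n (z ι) (φ ι) (g ι)).prod) i j).natDegree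
          ≤ ∑ ι, (φ ι - Polynomial.C (1 / 2 : ℂ) * pdot n (g ι) (g ι)).natDegree) ∧
      (∀ i j, (((List.ofFn fun ι => Gmat n (z ι) (φ ι) (g ι)).prod) i j).coeff
          (∑ ι, (φ ι - Polynomial.C (1 / 2 : ℂ) * pdot n (g ι) (g ι)).natDegree)
        = lam * (dd i * (z 0 i * star (z (Fin.last k) j)))) := by
  induction k with
  | zero =>
    obtain ⟨m, c, hc, hm1, hmq, _, hdeg, hcoeff⟩ :=
      Gfact n (z 0) (φ 0) (g 0) (hφ 0) (hg 0) (hnt 0)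
    have hprod : (List.ofFn fun ι : Fin 1 => Gmat n (z ι) (φ ι) (g ι)).prod
        = Gmat n (z 0) (φ 0) (g 0) := by
      simp [List.ofFn_succ]
    have hsum : (∑ ι : Fin 1, (φ ι - Polynomial.C (1 / 2 : ℂ) * pdot n (g ι) (g ι)).natDegree)
        = m := by rw [Fin.sum_univ_one, ← hmq]
    refine ⟨c, hc, ?_, ?_⟩ <;> intro i j <;> rw [hprod, hsum]
    · exact hdeg i j
    · exact hcoeff i j
  | succ k ih =>
    set z' : Fin (k + 1) → (Fin (n + 2) → ℂ) := fun ι => z ι.castSucc with hz'def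
    set φ' : Fin (k + 1) → ℂ[X] := fun ι => φ ι.castSucc with hφ'def
    set g' : Fin (k + 1) → (Fin (n + 2) → ℂ[X]) := fun ι => g ι.castSucc with hg'def
    obtain ⟨lam, hlam, hdegA, hcoeffA⟩ := ih z' φ' g' (fun ι => hz _) (fun ι => hφ _)
      (fun ι => hg _) (fun ι => hnt _) (fun i h => halt i (by omega))
    set L : Fin (k + 2) := Fin.last (k + 1) with hLdef
    obtain ⟨m, c, hc, hm1, hmq, _, hdegB, hcoeffB⟩ :=
      Gfact n (z L) (φ L) (g L) (hφ L) (hg L) (hnt L)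
    set A : PM n := (List.ofFn fun ι => Gmat n (z' ι) (φ' ι) (g' ι)).prod with hAdef
    set B : PM n := Gmat n (z L) (φ L) (g L) with hBdef
    set S' : ℕ := ∑ ι, (φ' ι - Polynomial.C (1 / 2 : ℂ) * pdot n (g' ι) (g' ι)).natDegree
      with hS'def
    have hprod : (List.ofFn fun ι : Fin (k + 2) => Gmat n (z ι) (φ ι) (g ι)).prod = A * B := by
      rw [List.ofFn_succ', List.concat_eq_append, List.prod_append, List.prod_cons,
        List.prod_nil, mul_one]
    have hsum : (∑ ι : Fin (k + 2),
        (φ ι - Polynomial.C (1 / 2 : ℂ) * pdot n (g ι) (g ι)).natDegree) = S' + m := by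
      rw [Fin.sum_univ_castSucc, ← hmq]
    obtain ⟨hd, hcf⟩ := matmul_deg n A B S' m hdegA hdegB
    -- pairing scalar
    have hpair : star (z' (Fin.last k)) ⬝ᵥ (Dm n).mulVec (z L) ≠ 0 := by
      apply Xi_pair n _ _ (hz _) (hz _)
      show z (Fin.last k).castSucc ≠ z L
      have h1 : (Fin.last k).castSucc = (⟨k, by omega⟩ : Fin (k + 2)) := by ext; simp
      have h2 : L = (⟨k + 1, by omega⟩ : Fin (k + 2)) := by ext; simp [hLdef]
      rw [h1, h2]
      exact halt k (by omega)
    set D : ℂ := star (z' (Fin.last k)) ⬝ᵥ (Dm n).mulVec (z L) with hDdef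
    have hDsum : D = ∑ t, (starRingEnd ℂ) (z' (Fin.last k) t) * (dd t * z L t) := dotD n _ _
    refine ⟨lam * c * D, by simp [hlam, hc, hpair], ?_, ?_⟩ <;> intro i j <;> rw [hprod, hsum]
    · exact hd i j
    · rw [hcf i j]
      have : ∀ t, (A i t).coeff S' * (B t j).coeff m
          = (lam * c * ((starRingEnd ℂ) (z' (Fin.last k) t) * (dd t * z L t)))
            * (dd i * (z 0 i * star (z (Fin.last (k+1)) j))) := by
        intro t
        rw [hcoeffA i t, hcoeffB t j]
        have h0 : z' 0 = z 0 := by congr 1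
        rw [h0]
        simp only [RCLike.star_def]
        ring
      rw [Finset.sum_congr rfl fun t _ => this t, ← Finset.sum_mul, ← Finset.mul_sum, ← hDsum]
lemma degPM_eq (n : ℕ) (U : PM n) (S : ℕ) (hub : ∀ i j, (U i j).natDegree ≤ S)
    (hne : (U 0 0).coeff S ≠ 0) : degPM n U = S := by
  refine le_antisymm (Finset.sup_le fun p _ => hub p.1 p.2) ?_
  refine le_trans (Polynomial.le_natDegree_of_ne_zero hne) ?_
  exact Finset.le_sup (f := fun p : Fin (n + 2) × Fin (n + 2) => (U p.1 p.2).natDegree)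
    (Finset.mem_univ ((0 : Fin (n + 2)), (0 : Fin (n + 2))))
lemma degPM_G (n : ℕ) (z : Fin (n + 2) → ℂ) (φ : ℂ[X]) (g : Fin (n + 2) → ℂ[X])
    (hz : z ∈ Xi n) (hφ : φ ∈ Phi) (hg : g ∈ DeltaZ n z) (hnt : ¬(φ = 0 ∧ g = 0)) :
    degPM n (Gmat n z φ g) = (φ - Polynomial.C (1 / 2 : ℂ) * pdot n g g).natDegree ∧
    degPM n (Gmat n z φ g) = (φ - pdot n g g).natDegree := by
  obtain ⟨m, c, hc, hm1, hmq, hmq1, hdeg, hcoeff⟩ := Gfact n z φ g hφ hg hnt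
  have h00 : (Gmat n z φ g 0 0).coeff m ≠ 0 := by
    rw [hcoeff 0 0, hz.1, dd_zero]
    simp [hc]
  have hd := degPM_eq n _ m hdeg h00
  exact ⟨by rw [hd, hmq], by rw [hd, hmq1]⟩

/-- Theorem 1, statement 4, degree additivity: for an alternating product
of nontrivial factors, `deg U = Σ deg G_{z_ι}(φ_ι,g_ι) = Σ deg(φ_ι − g_ι*g_ι)`. -/
theorem stmt7 (n : ℕ) (η : ℕ) (hη : 1 ≤ η)
    (z : Fin η → (Fin (n + 2) → ℂ)) (φ : Fin η → ℂ[X]) (g : Fin η → (Fin (n + 2) → ℂ[X]))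
    (hz : ∀ ι, z ι ∈ Xi n) (hφ : ∀ ι, φ ι ∈ Phi) (hg : ∀ ι, g ι ∈ DeltaZ n (z ι))
    (hnt : ∀ ι, ¬(φ ι = 0 ∧ g ι = 0))
    (halt : ∀ (i : ℕ) (h : i + 1 < η), z ⟨i, by omega⟩ ≠ z ⟨i + 1, h⟩)
    (U : PM n) (hU : U = (List.ofFn fun ι => Gmat n (z ι) (φ ι) (g ι)).prod) :
    degPM n U = ∑ ι : Fin η, degPM n (Gmat n (z ι) (φ ι) (g ι)) ∧
      degPM n U = ∑ ι : Fin η, (φ ι - pdot n (g ι) (g ι)).natDegree := by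
  subst hU
  obtain ⟨k, rfl⟩ : ∃ k, η = k + 1 := ⟨η - 1, by omega⟩
  obtain ⟨lam, hlam, hub, hcoeff⟩ := prod_top n k z φ g hz hφ hg hnt halt
  set S := ∑ ι : Fin (k + 1),
    (φ ι - Polynomial.C (1 / 2 : ℂ) * pdot n (g ι) (g ι)).natDegree with hS
  have h00 : (((List.ofFn fun ι => Gmat n (z ι) (φ ι) (g ι)).prod) 0 0).coeff S ≠ 0 := by
    rw [hcoeff 0 0, (hz 0).1, (hz (Fin.last k)).1, dd_zero]
    simp [hlam]
  have hd := degPM_eq n _ S hub h00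
  constructor
  · rw [hd, hS]
    exact Finset.sum_congr rfl fun ι _ =>
      ((degPM_G n (z ι) (φ ι) (g ι) (hz ι) (hφ ι) (hg ι) (hnt ι)).1).symm
  · rw [hd, hS]
    refine Finset.sum_congr rfl fun ι _ => ?_
    have h1 := (degPM_G n (z ι) (φ ι) (g ι) (hz ι) (hφ ι) (hg ι) (hnt ι)).1
    have h2 := (degPM_G n (z ι) (φ ι) (g ι) (hz ι) (hφ ι) (hg ι) (hnt ι)).2
    omega
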